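/- Let γ(r_1,…,r_N) = (ρ(r_1)/N) ∏_{i=2}^N γ_i(r_1,r_i) and let c(r_1,…,r_N) = Σ_{1≤i<j≤N} 1/|r_i − r_j| be the Coulomb cost. Then ∫_{Ω^N} c(r_1,…,r_N) γ(r_1,…,r_N) dr_1⋯dr_N = (1/N) [ Σ_{2≤i<j≤N} ∫_Ω∫_Ω∫_Ω ρ(r)γ_i(r,r')γ_j(r,r'') / |r'−r''| dr dr' dr'' + Σ_{i=2}^N ∫_Ω∫_Ω ρ(r)γ_i(r,r') / |r−r'| dr dr' ] (as an identity in [0,∞]). -/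

import Mathlib

open MeasureTheory ENNReal BigOperators

section Aux

variable {E : Type*} [MeasurableSpace E] {N : ℕ} [NeZero N] {μ : Measure E} [SigmaFinite μ]

lemma meas_apply_pair (f : E → E → ℝ≥0∞) (hf : Measurable (Function.uncurry f))
    (a b : Fin N) : Measurable fun r : Fin N → E => f (r a) (r b) := by
  have := hf.comp ((measurable_pi_apply (X := fun _ : Fin N => E) a).prodMk (measurable_pi_apply b))
  exact this

lemma lmarginal_prod_aux (h : Fin N → E → E → ℝ≥0∞) (B : Finset (Fin N)) :
    (0 : Fin N) ∉ B → (∀ k ∈ B, Measurable (Function.uncurry (h k))) →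
    ∀ C : (Fin N → E) → ℝ≥0∞, Measurable C →
    (∀ (r : Fin N → E) (k) (t : E), k ∈ B → C (Function.update r k t) = C r) →
    ∀ y : Fin N → E,
    (∫⋯∫⁻_B, (fun r => C r * ∏ k ∈ B, h k (r 0) (r k)) ∂(fun _ => μ)) y
      = C y * ∏ k ∈ B, ∫⁻ t, h k (y 0) t ∂μ := by
  induction B using Finset.induction with
  | empty => intro _ _ C _ _ y; simp
  | @insert m B hm ih =>
    intro hB hh C hCm hC y
    have h0B : (0 : Fin N) ∉ B := fun hx => hB (Finset.mem_insert_of_mem hx)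
    have h0m : (0 : Fin N) ≠ m := fun e => hB (e ▸ Finset.mem_insert_self m B)
    have hmmeas : Measurable (Function.uncurry (h m)) := hh m (Finset.mem_insert_self m B)
    have hfm : Measurable fun r : Fin N → E => C r * h m (r 0) (r m) :=
      hCm.mul (meas_apply_pair _ hmmeas 0 m)
    have hfeq : (fun r : Fin N → E => C r * ∏ k ∈ insert m B, h k (r 0) (r k))
        = fun r => (C r * h m (r 0) (r m)) * ∏ k ∈ B, h k (r 0) (r k) := by
      funext r; rw [Finset.prod_insert hm, ← mul_assoc]
    have hprod : Measurable fun r : Fin N → E => ∏ k ∈ B, h k (r 0) (r k) :=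
      Finset.measurable_prod _ fun k hk =>
        meas_apply_pair _ (hh k (Finset.mem_insert_of_mem hk)) 0 k
    rw [hfeq, lmarginal_insert (fun r : Fin N → E =>
      (C r * h m (r 0) (r m)) * ∏ k ∈ B, h k (r 0) (r k)) (hfm.mul hprod : Measurable fun r : Fin N → E =>
      (C r * h m (r 0) (r m)) * ∏ k ∈ B, h k (r 0) (r k)) hm]
    have IH : ∀ t : E,
        (∫⋯∫⁻_B, (fun r => (C r * h m (r 0) (r m)) * ∏ k ∈ B, h k (r 0) (r k))
            ∂(fun _ => μ)) (Function.update y m t)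
          = (C y * h m (y 0) t) * ∏ k ∈ B, ∫⁻ t', h k (y 0) t' ∂μ := by
      intro t
      rw [ih h0B (fun k hk => hh k (Finset.mem_insert_of_mem hk))
        (fun r => C r * h m (r 0) (r m)) hfm
        (fun r k t' hk => by
          have hk0 : (0 : Fin N) ≠ k := fun e => h0B (e ▸ hk)
          have hkm : k ≠ m := fun e => hm (e ▸ hk)
          rw [hC r k t' (Finset.mem_insert_of_mem hk),
            Function.update_of_ne hk0, Function.update_of_ne hkm.symm])
        (Function.update y m t)]
      rw [hC y m t (Finset.mem_insert_self m B), Function.update_of_ne h0m,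
        Function.update_self]
    simp only [IH]
    have hmt : Measurable fun t => h m (y 0) t := by
      have := hmmeas.comp ((measurable_const (a := y 0)).prodMk measurable_id)
      exact this
    calc ∫⁻ t, (C y * h m (y 0) t) * ∏ k ∈ B, ∫⁻ t', h k (y 0) t' ∂μ ∂μ
        = ∫⁻ t, ((C y * ∏ k ∈ B, ∫⁻ t', h k (y 0) t' ∂μ)) * h m (y 0) t ∂μ :=
          lintegral_congr fun t => by ring
      _ = (C y * ∏ k ∈ B, ∫⁻ t', h k (y 0) t' ∂μ) * ∫⁻ t, h m (y 0) t ∂μ :=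
          lintegral_const_mul _ hmt
      _ = C y * ∏ k ∈ insert m B, ∫⁻ t, h k (y 0) t ∂μ := by
          rw [Finset.prod_insert hm]; ring

lemma pi_lintegral_triple (x₀ : Fin N → E)
    (g : Fin N → E → E → ℝ≥0∞) (hg : ∀ k : Fin N, k ≠ 0 → Measurable (Function.uncurry (g k)))
    (hg1 : ∀ k : Fin N, k ≠ 0 → ∀ᵐ a ∂μ, ∫⁻ t, g k a t ∂μ = 1)
    (i j : Fin N) (hi : i ≠ 0) (hj : j ≠ 0) (hij : i ≠ j)
    (F : E → E → E → ℝ≥0∞) (hF : Measurable fun p : E × E × E => F p.1 p.2.1 p.2.2) :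
    ∫⁻ r, F (r 0) (r i) (r j) * ∏ k ∈ Finset.univ.erase (0 : Fin N), g k (r 0) (r k)
        ∂(Measure.pi fun _ : Fin N => μ)
      = ∫⁻ a, ∫⁻ b, ∫⁻ c, F a b c * g i a b * g j a c ∂μ ∂μ ∂μ := by
  classical
  set B : Finset (Fin N) := ((Finset.univ.erase 0).erase i).erase j with hBdef
  have hkB : ∀ k ∈ B, k ≠ j ∧ k ≠ i ∧ k ≠ 0 := by
    intro k hk; simp only [hBdef, Finset.mem_erase, Finset.mem_univ, and_true] at hk
    exact hk
  have h0B : (0 : Fin N) ∉ B := fun hx => ((hkB 0 hx).2.2) rfl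
  have hjB : j ∉ B := Finset.notMem_erase _ _
  have hiB : i ∉ insert j B := by
    intro hx
    rcases Finset.mem_insert.1 hx with h | h
    · exact hij h
    · exact (hkB i h).2.1 rfl
  have h0ins : (0 : Fin N) ∉ insert i (insert j B) := by
    intro hx
    rcases Finset.mem_insert.1 hx with h | hx
    · exact hi h.symm
    rcases Finset.mem_insert.1 hx with h | h
    · exact hj h.symm
    · exact h0B h
  have hsplit : Finset.univ.erase (0 : Fin N) = insert i (insert j B) := by
    ext k
    by_cases h1 : k = i <;> by_cases h2 : k = j <;>
      simp [hBdef, h1, h2, hi, hj, Finset.mem_erase, Finset.mem_insert]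
  have huniv : insert (0 : Fin N) (insert i (insert j B)) = Finset.univ := by
    rw [← hsplit]; exact Finset.insert_erase (Finset.mem_univ 0)
  have hgi := hg i hi
  have hgj := hg j hj
  have hF' : Measurable fun r : Fin N → E => F (r 0) (r i) (r j) := by
    have := hF.comp ((measurable_pi_apply (X := fun _ : Fin N => E) 0).prodMk
      ((measurable_pi_apply i).prodMk (measurable_pi_apply j)))
    exact this
  have hCm : Measurable fun r : Fin N → E =>
      F (r 0) (r i) (r j) * g i (r 0) (r i) * g j (r 0) (r j) :=
    (hF'.mul (meas_apply_pair _ hgi 0 i)).mul (meas_apply_pair _ hgj 0 j)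
  have hprodM : Measurable fun r : Fin N → E => ∏ k ∈ B, g k (r 0) (r k) :=
    Finset.measurable_prod _ fun k hk => meas_apply_pair _ (hg k (hkB k hk).2.2) 0 k
  have hM : Measurable fun r : Fin N → E =>
      (F (r 0) (r i) (r j) * g i (r 0) (r i) * g j (r 0) (r j)) * ∏ k ∈ B, g k (r 0) (r k) :=
    hCm.mul hprodM
  have hCinv : ∀ (r : Fin N → E) (k) (t : E), k ∈ B →
      (fun r : Fin N → E => F (r 0) (r i) (r j) * g i (r 0) (r i) * g j (r 0) (r j))
        (Function.update r k t)
      = (fun r : Fin N → E => F (r 0) (r i) (r j) * g i (r 0) (r i) * g j (r 0) (r j)) r := by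
    intro r k t hk
    obtain ⟨hkj, hki, hk0⟩ := hkB k hk
    dsimp only
    rw [Function.update_of_ne (Ne.symm hk0), Function.update_of_ne (Ne.symm hki),
      Function.update_of_ne (Ne.symm hkj)]
  have hae : ∀ᵐ a ∂μ, ∏ k ∈ B, (∫⁻ t, g k a t ∂μ) = 1 := by
    have h : ∀ᵐ a ∂μ, ∀ k ∈ B, (∫⁻ t, g k a t ∂μ) = 1 := by
      rw [Filter.eventually_all_finset]
      intro k hk
      exact hg1 k (hkB k hk).2.2
    exact h.mono fun a ha => Finset.prod_eq_one ha
  calc ∫⁻ r, F (r 0) (r i) (r j) * ∏ k ∈ Finset.univ.erase (0 : Fin N), g k (r 0) (r k)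
        ∂(Measure.pi fun _ : Fin N => μ)
      = ∫⁻ r, (F (r 0) (r i) (r j) * g i (r 0) (r i) * g j (r 0) (r j))
          * ∏ k ∈ B, g k (r 0) (r k) ∂(Measure.pi fun _ : Fin N => μ) := by
        refine lintegral_congr fun r => ?_
        rw [hsplit, Finset.prod_insert hiB, Finset.prod_insert hjB]; ring
    _ = (∫⋯∫⁻_Finset.univ, (fun r => (F (r 0) (r i) (r j) * g i (r 0) (r i) * g j (r 0) (r j))
          * ∏ k ∈ B, g k (r 0) (r k)) ∂(fun _ => μ)) x₀ := lintegral_eq_lmarginal_univ (μ := fun _ => μ) x₀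
    _ = ∫⁻ a, (∫⋯∫⁻_(insert i (insert j B)),
          (fun r => (F (r 0) (r i) (r j) * g i (r 0) (r i) * g j (r 0) (r j))
          * ∏ k ∈ B, g k (r 0) (r k)) ∂(fun _ => μ)) (Function.update x₀ 0 a) ∂μ := by
        rw [← huniv]; exact lmarginal_insert (μ := fun _ => μ) _ hM h0ins x₀
    _ = ∫⁻ a, ∫⁻ b, ∫⁻ c, F a b c * g i a b * g j a c ∂μ ∂μ ∂μ := by
        refine lintegral_congr_ae (hae.mono fun a ha => ?_)
        dsimp only
        rw [lmarginal_insert (μ := fun _ => μ) _ hM hiB]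
        refine lintegral_congr fun b => ?_
        rw [lmarginal_insert (μ := fun _ => μ) _ hM hjB]
        refine lintegral_congr fun cc => ?_
        refine Eq.trans (lmarginal_prod_aux g B h0B (fun k hk => hg k (hkB k hk).2.2)
          (fun r : Fin N → E => F (r 0) (r i) (r j) * g i (r 0) (r i) * g j (r 0) (r j))
          hCm hCinv (Function.update (Function.update (Function.update x₀ 0 a) i b) j cc)) ?_
        have e0 : Function.update (Function.update (Function.update x₀ 0 a) i b) j cc 0 = a := by
          rw [Function.update_of_ne (Ne.symm hj), Function.update_of_ne (Ne.symm hi),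
            Function.update_self]
        have ei : Function.update (Function.update (Function.update x₀ 0 a) i b) j cc i = b := by
          rw [Function.update_of_ne hij, Function.update_self]
        have ej : Function.update (Function.update (Function.update x₀ 0 a) i b) j cc j = cc :=
          Function.update_self _ _ _
        simp only [e0, ei, ej, ha, mul_one]

lemma pi_lintegral_double (x₀ : Fin N → E)
    (g : Fin N → E → E → ℝ≥0∞) (hg : ∀ k : Fin N, k ≠ 0 → Measurable (Function.uncurry (g k)))
    (hg1 : ∀ k : Fin N, k ≠ 0 → ∀ᵐ a ∂μ, ∫⁻ t, g k a t ∂μ = 1)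
    (j : Fin N) (hj : j ≠ 0)
    (F : E → E → ℝ≥0∞) (hF : Measurable (Function.uncurry F)) :
    ∫⁻ r, F (r 0) (r j) * ∏ k ∈ Finset.univ.erase (0 : Fin N), g k (r 0) (r k)
        ∂(Measure.pi fun _ : Fin N => μ)
      = ∫⁻ a, ∫⁻ b, F a b * g j a b ∂μ ∂μ := by
  classical
  set B : Finset (Fin N) := (Finset.univ.erase 0).erase j with hBdef
  have hkB : ∀ k ∈ B, k ≠ j ∧ k ≠ 0 := by
    intro k hk; simp only [hBdef, Finset.mem_erase, Finset.mem_univ, and_true] at hk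
    exact hk
  have h0B : (0 : Fin N) ∉ B := fun hx => ((hkB 0 hx).2) rfl
  have hjB : j ∉ B := Finset.notMem_erase _ _
  have h0ins : (0 : Fin N) ∉ insert j B := by
    intro hx
    rcases Finset.mem_insert.1 hx with h | h
    · exact hj h.symm
    · exact h0B h
  have hsplit : Finset.univ.erase (0 : Fin N) = insert j B := by
    rw [hBdef]
    exact (Finset.insert_erase (Finset.mem_erase.2 ⟨hj, Finset.mem_univ j⟩)).symm
  have huniv : insert (0 : Fin N) (insert j B) = Finset.univ := by
    rw [← hsplit]; exact Finset.insert_erase (Finset.mem_univ 0)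
  have hgj := hg j hj
  have hF' : Measurable fun r : Fin N → E => F (r 0) (r j) := meas_apply_pair _ hF 0 j
  have hCm : Measurable fun r : Fin N → E => F (r 0) (r j) * g j (r 0) (r j) :=
    hF'.mul (meas_apply_pair _ hgj 0 j)
  have hprodM : Measurable fun r : Fin N → E => ∏ k ∈ B, g k (r 0) (r k) :=
    Finset.measurable_prod _ fun k hk => meas_apply_pair _ (hg k (hkB k hk).2) 0 k
  have hM : Measurable fun r : Fin N → E =>
      (F (r 0) (r j) * g j (r 0) (r j)) * ∏ k ∈ B, g k (r 0) (r k) := hCm.mul hprodM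
  have hCinv : ∀ (r : Fin N → E) (k) (t : E), k ∈ B →
      (fun r : Fin N → E => F (r 0) (r j) * g j (r 0) (r j)) (Function.update r k t)
      = (fun r : Fin N → E => F (r 0) (r j) * g j (r 0) (r j)) r := by
    intro r k t hk
    obtain ⟨hkj, hk0⟩ := hkB k hk
    dsimp only
    rw [Function.update_of_ne (Ne.symm hk0), Function.update_of_ne (Ne.symm hkj)]
  have hae : ∀ᵐ a ∂μ, ∏ k ∈ B, (∫⁻ t, g k a t ∂μ) = 1 := by
    have h : ∀ᵐ a ∂μ, ∀ k ∈ B, (∫⁻ t, g k a t ∂μ) = 1 := by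
      rw [Filter.eventually_all_finset]
      intro k hk
      exact hg1 k (hkB k hk).2
    exact h.mono fun a ha => Finset.prod_eq_one ha
  calc ∫⁻ r, F (r 0) (r j) * ∏ k ∈ Finset.univ.erase (0 : Fin N), g k (r 0) (r k)
        ∂(Measure.pi fun _ : Fin N => μ)
      = ∫⁻ r, (F (r 0) (r j) * g j (r 0) (r j))
          * ∏ k ∈ B, g k (r 0) (r k) ∂(Measure.pi fun _ : Fin N => μ) := by
        refine lintegral_congr fun r => ?_
        rw [hsplit, Finset.prod_insert hjB]; ring
    _ = (∫⋯∫⁻_Finset.univ, (fun r => (F (r 0) (r j) * g j (r 0) (r j))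
          * ∏ k ∈ B, g k (r 0) (r k)) ∂(fun _ => μ)) x₀ :=
        lintegral_eq_lmarginal_univ (μ := fun _ => μ) x₀
    _ = ∫⁻ a, (∫⋯∫⁻_(insert j B),
          (fun r => (F (r 0) (r j) * g j (r 0) (r j))
          * ∏ k ∈ B, g k (r 0) (r k)) ∂(fun _ => μ)) (Function.update x₀ 0 a) ∂μ := by
        rw [← huniv]; exact lmarginal_insert (μ := fun _ => μ) _ hM h0ins x₀
    _ = ∫⁻ a, ∫⁻ b, F a b * g j a b ∂μ ∂μ := by
        refine lintegral_congr_ae (hae.mono fun a ha => ?_)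
        dsimp only
        rw [lmarginal_insert (μ := fun _ => μ) _ hM hjB]
        refine lintegral_congr fun b => ?_
        refine Eq.trans (lmarginal_prod_aux g B h0B (fun k hk => hg k (hkB k hk).2)
          (fun r : Fin N → E => F (r 0) (r j) * g j (r 0) (r j))
          hCm hCinv (Function.update (Function.update x₀ 0 a) j b)) ?_
        have e0 : Function.update (Function.update x₀ 0 a) j b 0 = a := by
          rw [Function.update_of_ne (Ne.symm hj), Function.update_self]
        have ej : Function.update (Function.update x₀ 0 a) j b j = b :=
          Function.update_self _ _ _
        simp only [e0, ej, ha, mul_one]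

end Aux

/-- With `γ(r₁,…,r_N) = (ρ(r₁)/N) ∏_{i=2}^N γ_i(r₁,r_i)` and the Coulomb cost
`c(r₁,…,r_N) = Σ_{i<j} 1/|r_i − r_j|`, the transport cost `∫_{Ω^N} c γ` equals
`(1/N) [ Σ_{2≤i<j≤N} ∫∫∫ ρ(r)γ_i(r,r')γ_j(r,r'')/|r'−r''| + Σ_{i=2}^N ∫∫ ρ(r)γ_i(r,r')/|r−r'| ]`,
as an identity in `[0,∞]`. -/
theorem coulomb_cost_of_product_ansatz
    (d N : ℕ) [NeZero N] (hd : 1 ≤ d) (hN : 2 ≤ N)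
    (Ω : Set (EuclideanSpace ℝ (Fin d))) (hΩm : MeasurableSet Ω)
    (hΩb : Bornology.IsBounded Ω)
    (ρ : EuclideanSpace ℝ (Fin d) → ℝ≥0∞) (hρ : Measurable ρ)
    (hρmass : ∫⁻ x in Ω, ρ x = N)
    (g : Fin N → EuclideanSpace ℝ (Fin d) → EuclideanSpace ℝ (Fin d) → ℝ≥0∞)
    (hgm : ∀ i : Fin N, i ≠ 0 → Measurable (Function.uncurry (g i)))
    (hg1 : ∀ i : Fin N, i ≠ 0 →
      ∀ᵐ r ∂(volume.restrict Ω), ∫⁻ r' in Ω, g i r r' = 1)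
    (hg2 : ∀ i : Fin N, i ≠ 0 →
      ∀ᵐ r' ∂(volume.restrict Ω), ∫⁻ r in Ω, ρ r * g i r r' = ρ r')
    (γ : (Fin N → EuclideanSpace ℝ (Fin d)) → ℝ≥0∞)
    (hγ : γ = fun r => (ρ (r 0) / (N : ℝ≥0∞)) *
      ∏ i ∈ Finset.univ.erase (0 : Fin N), g i (r 0) (r i))
    (c : (Fin N → EuclideanSpace ℝ (Fin d)) → ℝ≥0∞)
    (hc : c = fun r => ∑ i : Fin N, ∑ j ∈ Finset.Ioi i,
      1 / ENNReal.ofReal ‖r i - r j‖) :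
    (∫⁻ r, c r * γ r ∂(Measure.pi fun _ : Fin N => volume.restrict Ω))
      = (N : ℝ≥0∞)⁻¹ *
        ((∑ i ∈ Finset.univ.erase (0 : Fin N), ∑ j ∈ Finset.Ioi i,
            ∫⁻ r in Ω, ∫⁻ r' in Ω, ∫⁻ r'' in Ω,
              ρ r * g i r r' * g j r r'' / ENNReal.ofReal ‖r' - r''‖) +
          ∑ i ∈ Finset.univ.erase (0 : Fin N),
            ∫⁻ r in Ω, ∫⁻ r' in Ω, ρ r * g i r r' / ENNReal.ofReal ‖r - r'‖) := by
  classical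
  subst hγ hc
  -- measurability of the per-pair integrand
  have hTm : ∀ i j : Fin N, Measurable fun r : Fin N → EuclideanSpace ℝ (Fin d) =>
      ((ENNReal.ofReal ‖r i - r j‖)⁻¹ * ρ (r 0)) *
        ∏ k ∈ Finset.univ.erase (0 : Fin N), g k (r 0) (r k) := by
    intro i j
    have h1 : Measurable fun r : Fin N → EuclideanSpace ℝ (Fin d) => (ENNReal.ofReal ‖r i - r j‖)⁻¹ :=
      (((measurable_pi_apply i).sub (measurable_pi_apply j)).norm.ennreal_ofReal).inv
    have h2 : Measurable fun r : Fin N → EuclideanSpace ℝ (Fin d) => ρ (r 0) := hρ.comp (measurable_pi_apply 0)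
    have h3 : Measurable fun r : Fin N → EuclideanSpace ℝ (Fin d) =>
        ∏ k ∈ Finset.univ.erase (0 : Fin N), g k (r 0) (r k) :=
      Finset.measurable_prod _ fun k hk =>
        meas_apply_pair _ (hgm k (Finset.mem_erase.1 hk).1) 0 k
    exact (h1.mul h2).mul h3
  have hNinv : ((N : ℝ≥0∞))⁻¹ ≠ ⊤ := ENNReal.inv_ne_top.2 (Nat.cast_ne_zero.2 (NeZero.ne N))
  calc (∫⁻ r, (fun r : Fin N → EuclideanSpace ℝ (Fin d) => ∑ i : Fin N, ∑ j ∈ Finset.Ioi i,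
          1 / ENNReal.ofReal ‖r i - r j‖) r *
        (fun r : Fin N → EuclideanSpace ℝ (Fin d) => (ρ (r 0) / (N : ℝ≥0∞)) *
          ∏ i ∈ Finset.univ.erase (0 : Fin N), g i (r 0) (r i)) r
        ∂(Measure.pi fun _ : Fin N => volume.restrict Ω))
      = ∫⁻ r, (N : ℝ≥0∞)⁻¹ * ∑ i : Fin N, ∑ j ∈ Finset.Ioi i,
          (((ENNReal.ofReal ‖r i - r j‖)⁻¹ * ρ (r 0)) *
            ∏ k ∈ Finset.univ.erase (0 : Fin N), g k (r 0) (r k))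
          ∂(Measure.pi fun _ : Fin N => volume.restrict Ω) := by
        refine lintegral_congr fun r => ?_
        simp only [div_eq_mul_inv, one_mul, Finset.sum_mul, Finset.mul_sum]
        refine Finset.sum_congr rfl fun i _ => Finset.sum_congr rfl fun j _ => ?_
        ring
    _ = (N : ℝ≥0∞)⁻¹ * ∫⁻ r, ∑ i : Fin N, ∑ j ∈ Finset.Ioi i,
          (((ENNReal.ofReal ‖r i - r j‖)⁻¹ * ρ (r 0)) *
            ∏ k ∈ Finset.univ.erase (0 : Fin N), g k (r 0) (r k))
          ∂(Measure.pi fun _ : Fin N => volume.restrict Ω) := lintegral_const_mul' _ _ hNinv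
    _ = (N : ℝ≥0∞)⁻¹ *
        ((∑ i ∈ Finset.univ.erase (0 : Fin N), ∑ j ∈ Finset.Ioi i,
            ∫⁻ r in Ω, ∫⁻ r' in Ω, ∫⁻ r'' in Ω,
              ρ r * g i r r' * g j r r'' / ENNReal.ofReal ‖r' - r''‖) +
          ∑ i ∈ Finset.univ.erase (0 : Fin N),
            ∫⁻ r in Ω, ∫⁻ r' in Ω, ρ r * g i r r' / ENNReal.ofReal ‖r - r'‖) := by
        congr 1
        rw [lintegral_finset_sum _ (fun i _ => Finset.measurable_sum _ fun j _ => hTm i j)]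
        have hswap : ∀ i : Fin N,
            (∫⁻ r, ∑ j ∈ Finset.Ioi i,
              (((ENNReal.ofReal ‖r i - r j‖)⁻¹ * ρ (r 0)) *
                ∏ k ∈ Finset.univ.erase (0 : Fin N), g k (r 0) (r k))
              ∂(Measure.pi fun _ : Fin N => volume.restrict Ω))
            = ∑ j ∈ Finset.Ioi i, ∫⁻ r,
              (((ENNReal.ofReal ‖r i - r j‖)⁻¹ * ρ (r 0)) *
                ∏ k ∈ Finset.univ.erase (0 : Fin N), g k (r 0) (r k))
              ∂(Measure.pi fun _ : Fin N => volume.restrict Ω) :=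
          fun i => lintegral_finset_sum _ fun j _ => hTm i j
        simp only [hswap]
        rw [← Finset.add_sum_erase Finset.univ _ (Finset.mem_univ (0 : Fin N)), add_comm]
        congr 1
        · -- triple integrals, i ≠ 0
          refine Finset.sum_congr rfl fun i hi => Finset.sum_congr rfl fun j hj => ?_
          have hi0 : i ≠ 0 := (Finset.mem_erase.1 hi).1
          have hij : i < j := Finset.mem_Ioi.1 hj
          have hj0 : j ≠ 0 := by
            rintro rfl
            exact absurd hij (by simp)
          have hF3 : Measurable fun p : EuclideanSpace ℝ (Fin d) × EuclideanSpace ℝ (Fin d) × EuclideanSpace ℝ (Fin d) =>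
              (ENNReal.ofReal ‖p.2.1 - p.2.2‖)⁻¹ * ρ p.1 :=
            ((measurable_snd.fst.sub measurable_snd.snd).norm.ennreal_ofReal.inv).mul
              (hρ.comp measurable_fst)
          refine Eq.trans (pi_lintegral_triple (fun _ => 0) g hgm hg1 i j hi0 hj0
            (ne_of_lt hij) (fun a b c => (ENNReal.ofReal ‖b - c‖)⁻¹ * ρ a) hF3) ?_
          refine lintegral_congr fun a => lintegral_congr fun b => lintegral_congr fun c' => ?_
          simp only [div_eq_mul_inv]
          ring
        · -- double integrals, i = 0
          have hIoi : Finset.Ioi (0 : Fin N) = Finset.univ.erase 0 := by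
            ext k
            simp only [Finset.mem_Ioi, Finset.mem_erase, Finset.mem_univ, and_true]
            exact Fin.pos_iff_ne_zero' k
          rw [hIoi]
          refine Finset.sum_congr rfl fun j hj => ?_
          have hj0 : j ≠ 0 := (Finset.mem_erase.1 hj).1
          have hF2 : Measurable (Function.uncurry
              fun a b : EuclideanSpace ℝ (Fin d) => (ENNReal.ofReal ‖a - b‖)⁻¹ * ρ a) := by
            exact ((measurable_fst.sub measurable_snd).norm.ennreal_ofReal.inv).mul
              (hρ.comp measurable_fst)
          refine Eq.trans (pi_lintegral_double (fun _ => 0) g hgm hg1 j hj0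
            (fun a b => (ENNReal.ofReal ‖a - b‖)⁻¹ * ρ a) hF2) ?_
          refine lintegral_congr fun a => lintegral_congr fun b => ?_
          simp only [div_eq_mul_inv]
          ring
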